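/- Fundamental relation for SAFT: for f, g ∈ S(ℝ), ∫_ℝ η̄_A(ω) 𝓕_A(ρ̄_A f)(ω) g(ω) dω = ∫_ℝ η̄_A(ω) f(ω) 𝓕_A(ρ̄_A g)(ω) dω, where ρ̄_A, η̄_A denote complex conjugates of ρ_A(t) = e^{(πi/b)(at²+2pt)} and η_A(ω) = e^{(πi/b)(dω²+2(bq−dp)ω)}. -/

import Mathlib

open MeasureTheory Complex

noncomputable def SAFT (a b d p q : ℝ) (f : ℝ → ℂ) (ω : ℝ) : ℂ :=
  (1 / Real.sqrt |b|) *
    ∫ t : ℝ, f t *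
      Complex.exp ((Real.pi * Complex.I / b) *
        (a * t ^ 2 + 2 * p * t - 2 * ω * t + 2 * (b * q - d * p) * ω + d * ω ^ 2))

noncomputable def etaA (b d p q : ℝ) (ω : ℝ) : ℂ :=
  Complex.exp ((Real.pi * Complex.I / b) * (d * ω ^ 2 + 2 * (b * q - d * p) * ω))

noncomputable def rhoA (a b p : ℝ) (t : ℝ) : ℂ :=
  Complex.exp ((Real.pi * Complex.I / b) * (a * t ^ 2 + 2 * p * t))

lemma conj_etaA (b d p q ω : ℝ) :
    (starRingEnd ℂ) (etaA b d p q ω) =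
      Complex.exp (-((Real.pi * Complex.I / b) * (d * ω ^ 2 + 2 * (b * q - d * p) * ω))) := by
  unfold etaA
  rw [← Complex.exp_conj]
  congr 1
  simp only [map_mul, map_add, map_sub, map_div₀, map_pow, map_ofNat, Complex.conj_I,
    Complex.conj_ofReal]
  ring

lemma conj_rhoA (a b p t : ℝ) :
    (starRingEnd ℂ) (rhoA a b p t) =
      Complex.exp (-((Real.pi * Complex.I / b) * (a * t ^ 2 + 2 * p * t))) := by
  unfold rhoA
  rw [← Complex.exp_conj]
  congr 1
  simp only [map_mul, map_add, map_div₀, map_pow, map_ofNat, Complex.conj_I, Complex.conj_ofReal]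
  ring

lemma exp_comb (A B C z : ℂ) :
    Complex.exp A * (Complex.exp B * z * Complex.exp C) = z * Complex.exp (A + B + C) := by
  rw [Complex.exp_add, Complex.exp_add]; ring

lemma saft_key (a b d p q : ℝ) (f : ℝ → ℂ) (ω : ℝ) :
    (starRingEnd ℂ) (etaA b d p q ω) *
      SAFT a b d p q (fun t => (starRingEnd ℂ) (rhoA a b p t) * f t) ω
    = (1 / (Real.sqrt |b| : ℂ)) *
        ∫ t : ℝ, f t * Complex.exp (-(2 * Real.pi * Complex.I / b) * (ω * t)) := by
  unfold SAFT
  rw [conj_etaA, mul_left_comm, ← MeasureTheory.integral_const_mul]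
  congr 1
  apply MeasureTheory.integral_congr_ae
  filter_upwards with t
  rw [conj_rhoA, exp_comb]
  congr 2
  ring

theorem SAFT_fundamental_relation (a b c d p q : ℝ) (hb : b ≠ 0) (hA : a * d - b * c = 1)
    (f g : SchwartzMap ℝ ℂ) :
    (∫ ω : ℝ, (starRingEnd ℂ) (etaA b d p q ω) *
        SAFT a b d p q (fun t => (starRingEnd ℂ) (rhoA a b p t) * f t) ω * g ω) =
      ∫ ω : ℝ, (starRingEnd ℂ) (etaA b d p q ω) * f ω *
        SAFT a b d p q (fun t => (starRingEnd ℂ) (rhoA a b p t) * g t) ω := by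
  have hk : ∀ (f : SchwartzMap ℝ ℂ) (ω : ℝ),
      (starRingEnd ℂ) (etaA b d p q ω) *
        SAFT a b d p q (fun t => (starRingEnd ℂ) (rhoA a b p t) * f t) ω
      = (1 / (Real.sqrt |b| : ℂ)) *
          ∫ t : ℝ, f t * Complex.exp (-(2 * Real.pi * Complex.I / b) * (ω * t)) :=
    fun f ω => saft_key a b d p q f ω
  simp_rw [hk]
  -- also rewrite RHS which has shape eta * f ω * SAFT
  have hk2 : ∀ ω : ℝ,
      (starRingEnd ℂ) (etaA b d p q ω) * f ω *
        SAFT a b d p q (fun t => (starRingEnd ℂ) (rhoA a b p t) * g t) ω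
      = f ω * ((1 / (Real.sqrt |b| : ℂ)) *
          ∫ t : ℝ, g t * Complex.exp (-(2 * Real.pi * Complex.I / b) * (ω * t))) := by
    intro ω
    rw [mul_comm ((starRingEnd ℂ) (etaA b d p q ω)) (f ω), mul_assoc, hk g ω]
  simp_rw [hk2]
  set c : ℂ := (1 / (Real.sqrt |b| : ℂ))
  set K : ℝ → ℝ → ℂ := fun ω t => Complex.exp (-(2 * Real.pi * Complex.I / b) * (ω * t)) with hK
  have hKsymm : ∀ ω t, K ω t = K t ω := by
    intro ω t; simp only [hK]; ring_nf
  have hmeas : Integrable (Function.uncurry fun ω t => f t * g ω * K ω t)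
      ((volume : Measure ℝ).prod volume) := by
    have h1 : Integrable (fun z : ℝ × ℝ => (g z.1 : ℂ) * f z.2)
        ((volume : Measure ℝ).prod volume) :=
      (g.integrable).mul_prod (f.integrable)
    refine h1.mono ?_ ?_
    · apply Continuous.aestronglyMeasurable
      fun_prop
    · filter_upwards with z
      simp only [Function.uncurry]
      rw [norm_mul, norm_mul, norm_mul]
      have : ‖K z.1 z.2‖ = 1 := by
        simp only [hK, Complex.norm_exp]
        norm_num [Complex.div_re, Complex.mul_re]
      rw [this, mul_one, mul_comm ‖(f z.2 : ℂ)‖ ‖(g z.1 : ℂ)‖]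
  have inner1 : ∀ ω : ℝ, (∫ t : ℝ, f t * K ω t) * g ω = ∫ t : ℝ, f t * g ω * K ω t := by
    intro ω
    rw [← MeasureTheory.integral_mul_const]
    exact integral_congr_ae (.of_forall fun t => by ring)
  have inner2 : ∀ t : ℝ, (∫ ω : ℝ, f t * g ω * K ω t) = f t * ∫ ω : ℝ, g ω * K t ω := by
    intro t
    rw [← MeasureTheory.integral_const_mul]
    refine integral_congr_ae (.of_forall fun ω => ?_)
    show f t * g ω * K ω t = f t * (g ω * K t ω)
    rw [hKsymm ω t]; ring
  calc (∫ ω : ℝ, c * (∫ t : ℝ, f t * K ω t) * g ω)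
      = ∫ ω : ℝ, c * ∫ t : ℝ, f t * g ω * K ω t :=
        integral_congr_ae (.of_forall fun ω => by beta_reduce; rw [mul_assoc, inner1])
    _ = c * ∫ ω : ℝ, ∫ t : ℝ, f t * g ω * K ω t := MeasureTheory.integral_const_mul _ _
    _ = c * ∫ t : ℝ, ∫ ω : ℝ, f t * g ω * K ω t := by
        rw [MeasureTheory.integral_integral_swap hmeas]
    _ = c * ∫ t : ℝ, f t * ∫ ω : ℝ, g ω * K t ω := by
        congr 1
        exact integral_congr_ae (.of_forall fun t => inner2 t)
    _ = ∫ t : ℝ, f t * (c * ∫ ω : ℝ, g ω * K t ω) := by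
        rw [← MeasureTheory.integral_const_mul]
        exact integral_congr_ae (.of_forall fun t => by ring)
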